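/- The bipartite mixed state ρ^{AB} = (1/4)(|10⟩⟨10| + |10⟩⟨01| + |01⟩⟨10| + |01⟩⟨01| + |12⟩⟨12| + |12⟩⟨21| + |21⟩⟨12| + |21⟩⟨21|) on C³ ⊗ C³, obtained by tracing out the qubit from the pure state |ψ⟩ = (1/2)(|0,1,0⟩ + |0,0,1⟩ + |1,1,2⟩ + |1,2,1⟩) ∈ C² ⊗ C³ ⊗ C³, is not separable. Hence this pure 2 × 3 × 3 tripartite state is robust against the loss of the qubit. -/

import Mathlib

open scoped Kronecker ComplexConjugate ComplexOrder Matrix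

noncomputable section

/-- A density matrix: positive semidefinite with trace 1. -/
def IsDensity {n : Type} [Fintype n] [DecidableEq n] (ρ : Matrix n n ℂ) : Prop :=
  ρ.PosSemidef ∧ ρ.trace = 1

/-- Separability of a bipartite density matrix: a finite convex combination of
tensor (Kronecker) products of density matrices. -/
def Separable {n m : Type} [Fintype n] [DecidableEq n] [Fintype m] [DecidableEq m]
    (ρ : Matrix (n × m) (n × m) ℂ) : Prop :=
  ∃ (L : ℕ) (p : Fin L → ℝ) (A : Fin L → Matrix n n ℂ) (B : Fin L → Matrix m m ℂ),
    (∀ i, 0 < p i) ∧ (∑ i, p i) = 1 ∧ (∀ i, IsDensity (A i)) ∧ (∀ i, IsDensity (B i)) ∧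
    ρ = ∑ i, (p i : ℂ) • (A i ⊗ₖ B i)

/-- Partial trace over the first tensor factor. -/
def ptraceFst {k n : Type} [Fintype k] (ρ : Matrix (k × n) (k × n) ℂ) : Matrix n n ℂ :=
  fun i j => ∑ a, ρ (a, i) (a, j)

/-- Partial trace over the second tensor factor. -/
def ptraceSnd {n m : Type} [Fintype m] (ρ : Matrix (n × m) (n × m) ℂ) : Matrix n n ℂ :=
  fun i j => ∑ b, ρ (i, b) (j, b)

/-- The rank-one projection |ψ⟩⟨ψ|. -/
def proj {n : Type} (ψ : n → ℂ) : Matrix n n ℂ := Matrix.vecMulVec ψ (star ψ)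

/-- Partial transpose with respect to the first tensor factor. -/
def ptransposeFst {n m : Type} (ρ : Matrix (n × m) (n × m) ℂ) : Matrix (n × m) (n × m) ℂ :=
  fun x y => ρ (y.1, x.2) (x.1, y.2)

/-- The ket-bra |v⟩⟨w|. -/
def ketbra {n : Type} (v w : n → ℂ) : Matrix n n ℂ := Matrix.vecMulVec v (star w)

/-- Standard basis vector |a,i,j⟩ of ℂ² ⊗ ℂ³ ⊗ ℂ³. -/
def ket233 (a : Fin 2) (i j : Fin 3) : Fin 2 × (Fin 3 × Fin 3) → ℂ :=
  fun x => if x = (a, (i, j)) then 1 else 0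

/-- Standard basis vector |i,j⟩ of ℂ³ ⊗ ℂ³. -/
def ket33 (i j : Fin 3) : Fin 3 × Fin 3 → ℂ :=
  fun x => if x = (i, j) then 1 else 0


lemma kron_conjT {n m : Type} [Fintype n] [Fintype m]
    (A : Matrix n n ℂ) (B : Matrix m m ℂ) : (A ⊗ₖ B)ᴴ = Aᴴ ⊗ₖ Bᴴ := by
  ext ⟨x1, x2⟩ ⟨y1, y2⟩
  simp [Matrix.conjTranspose_apply, Matrix.kroneckerMap_apply, mul_comm]

open scoped MatrixOrder in
lemma psd_kron {n m : Type} [Fintype n] [DecidableEq n] [Fintype m] [DecidableEq m]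
    {A : Matrix n n ℂ} {B : Matrix m m ℂ}
    (hA : A.PosSemidef) (hB : B.PosSemidef) : (A ⊗ₖ B).PosSemidef := by
  obtain ⟨P, rfl⟩ := CStarAlgebra.nonneg_iff_eq_star_mul_self.mp hA.nonneg
  obtain ⟨Q, rfl⟩ := CStarAlgebra.nonneg_iff_eq_star_mul_self.mp hB.nonneg
  rw [Matrix.star_eq_conjTranspose, Matrix.star_eq_conjTranspose]
  have h : (Pᴴ * P) ⊗ₖ (Qᴴ * Q) = (P ⊗ₖ Q)ᴴ * (P ⊗ₖ Q) := by
    rw [kron_conjT, Matrix.mul_kronecker_mul]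
  rw [h]
  exact Matrix.posSemidef_conjTranspose_mul_self _

lemma psd_smul {n : Type} [Fintype n] {M : Matrix n n ℂ} (hM : M.PosSemidef)
    {c : ℝ} (hc : 0 ≤ c) : ((c : ℂ) • M).PosSemidef := by
  constructor
  · unfold Matrix.IsHermitian
    rw [Matrix.conjTranspose_smul, hM.1]
    norm_num
  · intro x
    exact (hM.smul (show (0 : ℂ) ≤ (c : ℂ) by exact_mod_cast hc)).2 x

set_option maxHeartbeats 1000000 in
/-- The bipartite mixed state
`ρ^{AB} = (1/4)(|10⟩⟨10|+|10⟩⟨01|+|01⟩⟨10|+|01⟩⟨01|+|12⟩⟨12|+|12⟩⟨21|+|21⟩⟨12|+|21⟩⟨21|)`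
on `ℂ³ ⊗ ℂ³` is the qubit-loss residual state of
`|ψ⟩ = (|0,1,0⟩+|0,0,1⟩+|1,1,2⟩+|1,2,1⟩)/2` and is not separable; hence this pure
`2 × 3 × 3` state is robust against the loss of the qubit. -/
theorem stmt10
    (ψ : Fin 2 × (Fin 3 × Fin 3) → ℂ)
    (hψ : ψ = fun x => (1 / 2 : ℂ) *
      (ket233 0 1 0 x + ket233 0 0 1 x + ket233 1 1 2 x + ket233 1 2 1 x))
    (ρAB : Matrix (Fin 3 × Fin 3) (Fin 3 × Fin 3) ℂ)
    (hρAB : ρAB = (1 / 4 : ℂ) •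
      (ketbra (ket33 1 0) (ket33 1 0) + ketbra (ket33 1 0) (ket33 0 1) +
       ketbra (ket33 0 1) (ket33 1 0) + ketbra (ket33 0 1) (ket33 0 1) +
       ketbra (ket33 1 2) (ket33 1 2) + ketbra (ket33 1 2) (ket33 2 1) +
       ketbra (ket33 2 1) (ket33 1 2) + ketbra (ket33 2 1) (ket33 2 1))) :
    ρAB = ptraceFst (proj ψ) ∧ ¬ Separable ρAB := by
  constructor
  · ext ⟨i, j⟩ ⟨k, l⟩
    simp only [hρAB, hψ, ptraceFst, proj, ketbra, Matrix.vecMulVec_apply,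
      Matrix.smul_apply, Matrix.add_apply, Pi.star_apply, ket33, ket233,
      Fin.sum_univ_two, smul_eq_mul]
    fin_cases i <;> fin_cases j <;> fin_cases k <;> fin_cases l <;>
      norm_num [Prod.ext_iff, Fin.ext_iff, Complex.star_def, map_div₀, map_one,
        map_ofNat, map_add, map_mul, map_zero]
  · rintro ⟨L, p, A, B, hp, -, hA, hB, hρ⟩
    set v : Fin 3 × Fin 3 → ℂ :=
      fun x => if x = (0, 0) then 1 else if x = (1, 1) then -1 else 0 with hv
    have hT : (ptransposeFst ρAB).PosSemidef := by
      have heq : ptransposeFst ρAB = ∑ i, (p i : ℂ) • ((A i)ᵀ ⊗ₖ B i) := by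
        ext ⟨x1, x2⟩ ⟨y1, y2⟩
        simp [ptransposeFst, hρ, Matrix.sum_apply, Matrix.kroneckerMap_apply]
      rw [heq]
      refine Finset.sum_induction _ _ (fun a b ha hb => ha.add hb)
        Matrix.PosSemidef.zero ?_
      intro i _
      exact psd_smul (psd_kron ((hA i).1.transpose) (hB i).1) (hp i).le
    have h0 := hT.dotProduct_mulVec_nonneg v
    rw [hρAB] at h0
    simp only [ptransposeFst, Matrix.mulVec, dotProduct,
      Fintype.sum_prod_type, Fin.sum_univ_three, ketbra, ket33,
      Matrix.vecMulVec_apply, Matrix.smul_apply, Matrix.add_apply,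
      Pi.star_apply, hv, smul_eq_mul] at h0
    norm_num [Prod.ext_iff, Fin.ext_iff, Complex.le_def] at h0
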